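/- Let l_0,...,l_r be pairwise coprime positive integers, w_0,...,w_r positive integers with l_i w_i = l_j w_j for all i,j, and μ a positive integer such that gcd(w_j : j ≠ i) divides μ for every i. Then w_i ≤ μ^r for every i. -/

import Mathlib

theorem stmt_9 (r : ℕ) (l w : Fin (r + 1) → ℕ) (μ : ℕ) (hμ : 0 < μ)
    (hl : ∀ i, 0 < l i) (hw : ∀ i, 0 < w i)
    (hcop : ∀ i j : Fin (r + 1), i ≠ j → Nat.Coprime (l i) (l j))
    (h : ∀ i j : Fin (r + 1), l i * w i = l j * w j)
    (hgcd : ∀ i : Fin (r + 1), (Finset.univ.erase i).gcd w ∣ μ) :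
    ∀ i, w i ≤ μ ^ r := by
  intro i
  -- each l k divides w j for k ≠ j
  have hldvd : ∀ k j : Fin (r + 1), k ≠ j → l k ∣ w j := by
    intro k j hkj
    have hd : l k ∣ l j * w j := by
      rw [h j k]; exact Dvd.intro _ rfl
    exact (Nat.Coprime.dvd_of_dvd_mul_left (hcop k j hkj) hd)
  have hlμ : ∀ k, l k ≤ μ := by
    intro k
    refine Nat.le_of_dvd hμ (dvd_trans (Finset.dvd_gcd ?_) (hgcd k))
    intro j hj
    exact hldvd k j (Ne.symm (Finset.ne_of_mem_erase hj))
  rcases Nat.eq_zero_or_pos r with hr | hr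
  · -- r = 0 : contradiction from gcd over empty set
    exfalso
    subst hr
    have : (Finset.univ.erase i : Finset (Fin 1)) = ∅ := by
      apply Finset.eq_empty_of_forall_notMem
      intro j hj
      exact (Finset.ne_of_mem_erase hj) (Subsingleton.elim j i)
    have h0 := hgcd i
    rw [this, Finset.gcd_empty] at h0
    omega
  · -- r ≥ 1 : pick t ≠ i
    have : Nontrivial (Fin (r + 1)) := Fin.nontrivial_iff_two_le.mpr (by omega)
    obtain ⟨t, ht⟩ := exists_ne i
    set S : Finset (Fin (r + 1)) := (Finset.univ.erase i).erase t with hS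
    -- product over any subset of indices ≠ j divides w j
    have key : ∀ (s : Finset (Fin (r + 1))) (j : Fin (r + 1)), j ∉ s → s.prod l ∣ w j := by
      intro s
      induction s using Finset.induction_on with
      | empty => intro j _; simp
      | insert _ _ hx ih =>
        rename_i a s'
        intro j hj
        rw [Finset.prod_insert hx]
        have hja : a ≠ j := fun hh => hj (hh ▸ Finset.mem_insert_self a s')
        have hcp : Nat.Coprime (l a) (s'.prod l) := by
          apply Nat.Coprime.prod_right
          intro k hk
          exact hcop a k (fun hh => hx (hh ▸ hk))
        exact Nat.Coprime.mul_dvd_of_dvd_of_dvd hcp (hldvd a j hja)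
          (ih j (fun hh => hj (Finset.mem_insert_of_mem hh)))
    have hiS : i ∉ S := fun hh => (Finset.mem_erase.mp (Finset.mem_of_mem_erase hh)).1 rfl
    set T : Finset (Fin (r + 1)) := Finset.univ.erase t with hT
    have hiT : i ∈ T := Finset.mem_erase.mpr ⟨Ne.symm ht, Finset.mem_univ i⟩
    have hST : T.erase i = S := by rw [hS, hT]; exact Finset.erase_right_comm
    have hTprod : l i * S.prod l = T.prod l := by
      rw [← hST]; exact Finset.mul_prod_erase T l hiT
    obtain ⟨m, hm⟩ := key S i hiS
    -- m divides w j for every j ≠ t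
    have hmdvd : ∀ j ∈ T, m ∣ w j := by
      intro j hj
      have hjprod : l j * (T.erase j).prod l = T.prod l := Finset.mul_prod_erase T l hj
      have heq : l j * w j = l j * ((T.erase j).prod l * m) := by
        calc l j * w j = l i * w i := h j i
          _ = l i * (S.prod l * m) := by rw [hm]
          _ = (l i * S.prod l) * m := by ring
          _ = T.prod l * m := by rw [hTprod]
          _ = (l j * (T.erase j).prod l) * m := by rw [hjprod]
          _ = l j * ((T.erase j).prod l * m) := by ring
      have := Nat.eq_of_mul_eq_mul_left (hl j) heq
      exact Dvd.intro_left _ this.symm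
    have hmμ : m ≤ μ := by
      refine Nat.le_of_dvd hμ (dvd_trans (Finset.dvd_gcd hmdvd) (hgcd t))
    have hScard : S.card = r - 1 := by
      have hTcard : T.card = r := by
        rw [hT, Finset.card_erase_of_mem (Finset.mem_univ t)]
        simp
      rw [← hST, Finset.card_erase_of_mem hiT, hTcard]
    have hP : S.prod l ≤ μ ^ (r - 1) := by
      calc S.prod l ≤ μ ^ S.card := Finset.prod_le_pow_card S l μ (fun k _ => hlμ k)
        _ = μ ^ (r - 1) := by rw [hScard]
    calc w i = S.prod l * m := hm
      _ ≤ μ ^ (r - 1) * μ := Nat.mul_le_mul hP hmμ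
      _ = μ ^ r := by rw [← pow_succ]; congr 1; omega
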